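/- Let v_f > 0, 0 < ρ_c < ρ_j, and let V be the triangular speed-density function defined by V(ρ) = v_f for 0 ≤ ρ ≤ ρ_c and V(ρ) = (ρ_c/(ρ_j − ρ_c))·v_f·(ρ_j − ρ)/ρ for ρ_c < ρ ≤ ρ_j. Then for every ε ≥ 0, the flow-rate Q(ε, ρ) = ρ·V((1+ε)ρ) attains its maximum over ρ ∈ [0, ρ_j/(1+ε)] at ρ = ρ_c/(1+ε), and this maximum equals v_f·ρ_c/(1+ε); in particular constant lane-changing intensity ε reduces the capacity from v_f·ρ_c to v_f·ρ_c/(1+ε). -/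

import Mathlib

/-- For the triangular fundamental diagram with free-flow speed `v_f`, critical density
`ρ_c`, and jam density `ρ_j`, and for any lane-changing intensity `ε ≥ 0`, the flow-rate
`Q(ε, ρ) = ρ·V((1+ε)ρ)` attains its maximum over `[0, ρ_j/(1+ε)]` at `ρ = ρ_c/(1+ε)`,
and this maximum equals `v_f·ρ_c/(1+ε)`. -/
theorem triangular_capacity
    (v_f ρ_c ρ_j : ℝ) (hvf : 0 < v_f) (hρc : 0 < ρ_c) (hρcj : ρ_c < ρ_j)
    (V : ℝ → ℝ)
    (hV1 : ∀ ρ : ℝ, 0 ≤ ρ → ρ ≤ ρ_c → V ρ = v_f)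
    (hV2 : ∀ ρ : ℝ, ρ_c < ρ → ρ ≤ ρ_j → V ρ = ρ_c / (ρ_j - ρ_c) * v_f * ((ρ_j - ρ) / ρ))
    (Q : ℝ → ℝ → ℝ) (hQ : ∀ ε ρ, Q ε ρ = ρ * V ((1 + ε) * ρ))
    (ε : ℝ) (hε : 0 ≤ ε) :
    (∀ ρ ∈ Set.Icc 0 (ρ_j / (1 + ε)), Q ε ρ ≤ Q ε (ρ_c / (1 + ε))) ∧
    Q ε (ρ_c / (1 + ε)) = v_f * ρ_c / (1 + ε) := by
  have hc : (0:ℝ) < 1 + ε := by linarith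
  have hcrit : (1 + ε) * (ρ_c / (1 + ε)) = ρ_c := by field_simp
  have hQcrit : Q ε (ρ_c / (1 + ε)) = v_f * ρ_c / (1 + ε) := by
    rw [hQ, hcrit, hV1 ρ_c hρc.le le_rfl]
    field_simp
  refine ⟨fun ρ hρ => ?_, hQcrit⟩
  obtain ⟨h0, h1⟩ := hρ
  rw [hQcrit, hQ]
  have hle : (1 + ε) * ρ ≤ ρ_j := by
    calc (1 + ε) * ρ ≤ (1 + ε) * (ρ_j / (1 + ε)) := by nlinarith
    _ = ρ_j := by field_simp
  by_cases h : (1 + ε) * ρ ≤ ρ_c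
  · rw [hV1 _ (by positivity) h, le_div_iff₀ hc]
    nlinarith
  · push_neg at h
    rw [hV2 _ h hle]
    have hρpos : 0 < ρ := by nlinarith
    have hjc : 0 < ρ_j - ρ_c := by linarith
    have : ρ * (ρ_c / (ρ_j - ρ_c) * v_f * ((ρ_j - (1 + ε) * ρ) / ((1 + ε) * ρ)))
        = ρ_c * v_f * (ρ_j - (1 + ε) * ρ) / ((1 + ε) * (ρ_j - ρ_c)) := by
      field_simp
    rw [this, le_div_iff₀ hc, div_mul_eq_mul_div, div_le_iff₀ (by positivity)]
    nlinarith [mul_nonneg (mul_nonneg (mul_nonneg hρc.le hvf.le) hc.le) (sub_nonneg.mpr h.le)]
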